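/- The bridge between two northwest monotone convex chains is unique: if C₁ precedes C₂, tail(C₁).y < tail(C₂).y, all slopes in each chain are strictly decreasing, and (p₁,p₂) and (q₁,q₂) are both bridges, then p₁ = q₁ and p₂ = q₂. -/

import Mathlib

/- Cross product test: `cross a b q > 0` means `q` is strictly above the (directed) line
through `a` and `b` (with `a.1 < b.1`). -/
def cross (a b q : ℝ × ℝ) : ℝ :=
  (b.1 - a.1) * (q.2 - a.2) - (b.2 - a.2) * (q.1 - a.1)

/- A northwest monotone convex chain: strictly increasing x- and y-coordinates, and no
point of the chain lies strictly above the line through any two consecutive chain points. -/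
def IsNWChain (l : List (ℝ × ℝ)) : Prop :=
  l.Chain' (fun a b => a.1 < b.1) ∧
  l.Chain' (fun a b => a.2 < b.2) ∧
  ∀ i, (h : i + 1 < l.length) → ∀ q ∈ l,
    cross (l[i]'(Nat.lt_of_succ_lt h)) (l[i+1]'h) q ≤ 0

/- The slope of the segment from `a` to `b` (assuming `a.1 < b.1`). -/
noncomputable def slope2 (a b : ℝ × ℝ) : ℝ := (b.2 - a.2) / (b.1 - a.1)

/- STATEMENT 10: under general position (no three of the points collinear), the bridge
between two northwest monotone convex chains (with strictly decreasing slopes, the first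
preceding the second and with a lower last point) is unique. -/

private lemma le_getLast_of_chain' {l : List (ℝ × ℝ)} (hne : l ≠ [])
    (hl : l.Chain' (fun a b => a.1 < b.1)) : ∀ a ∈ l, a.1 ≤ (l.getLast hne).1 := by
  haveI : IsTrans (ℝ × ℝ) (fun a b : ℝ × ℝ => a.1 < b.1) := ⟨fun _ _ _ => lt_trans⟩
  rw [List.Chain', List.isChain_iff_pairwise] at hl
  intro a ha
  have hsplit : l.dropLast ++ [l.getLast hne] = l := List.dropLast_append_getLast hne
  have ha' : a ∈ l.dropLast ++ [l.getLast hne] := by rw [hsplit]; exact ha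
  have hpw : (l.dropLast ++ [l.getLast hne]).Pairwise (fun a b : ℝ × ℝ => a.1 < b.1) := by
    rw [hsplit]; exact hl
  rcases List.mem_append.1 ha' with h | h
  · exact le_of_lt ((List.pairwise_append.1 hpw).2.2 a h _ (List.mem_singleton_self _))
  · rw [List.mem_singleton.1 h]

private lemma head_le_of_chain' {l : List (ℝ × ℝ)} (hne : l ≠ [])
    (hl : l.Chain' (fun a b => a.1 < b.1)) : ∀ a ∈ l, (l.head hne).1 ≤ a.1 := by
  haveI : IsTrans (ℝ × ℝ) (fun a b : ℝ × ℝ => a.1 < b.1) := ⟨fun _ _ _ => lt_trans⟩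
  rw [List.Chain', List.isChain_iff_pairwise] at hl
  intro a ha
  have hcons : l.head hne :: l.tail = l := List.cons_head_tail hne
  have ha' : a ∈ l.head hne :: l.tail := by rw [hcons]; exact ha
  have hpw : (l.head hne :: l.tail).Pairwise (fun a b : ℝ × ℝ => a.1 < b.1) := by
    rw [hcons]; exact hl
  rcases List.mem_cons.1 ha' with h | h
  · rw [h]
  · exact le_of_lt ((List.pairwise_cons.1 hpw).1 a h)


theorem bridge_unique (l₁ l₂ : List (ℝ × ℝ)) (h₁ : IsNWChain l₁) (h₂ : IsNWChain l₂)
    (hne₁ : l₁ ≠ []) (hne₂ : l₂ ≠ [])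
    (hprec : (l₁.getLast hne₁).1 < (l₂.head hne₂).1)
    (htail : (l₁.getLast hne₁).2 < (l₂.getLast hne₂).2)
    (hslopes₁ : ∀ i, (h : i + 2 < l₁.length) →
      slope2 (l₁[i]'(by omega)) (l₁[i+1]'(by omega)) >
        slope2 (l₁[i+1]'(by omega)) (l₁[i+2]'h))
    (hslopes₂ : ∀ i, (h : i + 2 < l₂.length) →
      slope2 (l₂[i]'(by omega)) (l₂[i+1]'(by omega)) >
        slope2 (l₂[i+1]'(by omega)) (l₂[i+2]'h))
    (hgp : ∀ a ∈ l₁ ++ l₂, ∀ b ∈ l₁ ++ l₂, ∀ c ∈ l₁ ++ l₂,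
      a ≠ b → a ≠ c → b ≠ c → cross a b c ≠ 0)
    (p₁ q₁ p₂ q₂ : ℝ × ℝ)
    (hp₁ : p₁ ∈ l₁) (hq₁ : q₁ ∈ l₁) (hp₂ : p₂ ∈ l₂) (hq₂ : q₂ ∈ l₂)
    (hbp : ∀ r ∈ l₁ ++ l₂, cross p₁ p₂ r ≤ 0)
    (hbq : ∀ r ∈ l₁ ++ l₂, cross q₁ q₂ r ≤ 0) :
    p₁ = q₁ ∧ p₂ = q₂ := by
  obtain ⟨hx₁, -, -⟩ := h₁
  obtain ⟨hx₂, -, -⟩ := h₂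
  have hxlt : ∀ a ∈ l₁, ∀ b ∈ l₂, a.1 < b.1 := fun a ha b hb =>
    lt_of_le_of_lt (le_getLast_of_chain' hne₁ hx₁ a ha)
      (lt_of_lt_of_le hprec (head_le_of_chain' hne₂ hx₂ b hb))
  have hm : ∀ a ∈ l₁, a ∈ l₁ ++ l₂ := fun a ha => List.mem_append_left _ ha
  have hm' : ∀ b ∈ l₂, b ∈ l₁ ++ l₂ := fun b hb => List.mem_append_right _ hb
  have hne_ab : ∀ a ∈ l₁, ∀ b ∈ l₂, a ≠ b := by
    intro a ha b hb h
    have := hxlt a ha b hb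
    rw [h] at this
    exact lt_irrefl _ this
  have hp1p2 : p₁ ≠ p₂ := hne_ab _ hp₁ _ hp₂
  have hp1q2 : p₁ ≠ q₂ := hne_ab _ hp₁ _ hq₂
  have hq1p2 : q₁ ≠ p₂ := hne_ab _ hq₁ _ hp₂
  have hq1q2 : q₁ ≠ q₂ := hne_ab _ hq₁ _ hq₂
  by_cases h1 : p₁ = q₁
  · refine ⟨h1, ?_⟩
    by_contra h2
    have c1 : cross p₁ p₂ q₂ ≤ 0 := hbp q₂ (hm' _ hq₂)
    have c2 : cross q₁ q₂ p₂ ≤ 0 := hbq p₂ (hm' _ hp₂)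
    subst h1
    have e : cross p₁ q₂ p₂ = -cross p₁ p₂ q₂ := by simp only [cross]; ring
    rw [e] at c2
    exact hgp p₁ (hm _ hp₁) p₂ (hm' _ hp₂) q₂ (hm' _ hq₂) hp1p2 hp1q2 h2 (by linarith)
  · by_cases h2 : p₂ = q₂
    · exfalso
      have c1 : cross p₁ p₂ q₁ ≤ 0 := hbp q₁ (hm _ hq₁)
      have c2 : cross q₁ q₂ p₁ ≤ 0 := hbq p₁ (hm _ hp₁)
      subst h2
      have e : cross q₁ p₂ p₁ = -cross p₁ p₂ q₁ := by simp only [cross]; ring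
      rw [e] at c2
      exact hgp p₁ (hm _ hp₁) p₂ (hm' _ hp₂) q₁ (hm _ hq₁) hp1p2 h1 hq1p2.symm
        (by linarith)
    · exfalso
      have c1 : cross p₁ p₂ q₁ < 0 :=
        lt_of_le_of_ne (hbp q₁ (hm _ hq₁))
          (hgp p₁ (hm _ hp₁) p₂ (hm' _ hp₂) q₁ (hm _ hq₁) hp1p2 h1 hq1p2.symm)
      have c2 : cross p₁ p₂ q₂ < 0 :=
        lt_of_le_of_ne (hbp q₂ (hm' _ hq₂))
          (hgp p₁ (hm _ hp₁) p₂ (hm' _ hp₂) q₂ (hm' _ hq₂) hp1p2 hp1q2 h2)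
      have c3 : cross q₁ q₂ p₁ < 0 :=
        lt_of_le_of_ne (hbq p₁ (hm _ hp₁))
          (hgp q₁ (hm _ hq₁) q₂ (hm' _ hq₂) p₁ (hm _ hp₁) hq1q2 (Ne.symm h1) hp1q2.symm)
      have c4 : cross q₁ q₂ p₂ < 0 :=
        lt_of_le_of_ne (hbq p₂ (hm' _ hp₂))
          (hgp q₁ (hm _ hq₁) q₂ (hm' _ hq₂) p₂ (hm' _ hp₂) hq1q2 hq1p2 (Ne.symm h2))
      have xab : p₁.1 < p₂.1 := hxlt _ hp₁ _ hp₂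
      have xad : p₁.1 < q₂.1 := hxlt _ hp₁ _ hq₂
      have xcb : q₁.1 < p₂.1 := hxlt _ hq₁ _ hp₂
      have xcd : q₁.1 < q₂.1 := hxlt _ hq₁ _ hq₂
      set K : ℝ := (p₂.2 - p₁.2) * (q₂.1 - q₁.1) - (q₂.2 - q₁.2) * (p₂.1 - p₁.1) with hK
      have e1 : K * (q₂.1 - p₁.1) =
          (-(cross p₁ p₂ q₂)) * (q₂.1 - q₁.1) + (-(cross q₁ q₂ p₁)) * (p₂.1 - p₁.1) := by
        simp only [hK, cross]; ring
      have e2 : K * (p₂.1 - q₁.1) =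
          (cross q₁ q₂ p₂) * (p₂.1 - p₁.1) + (cross p₁ p₂ q₁) * (q₂.1 - q₁.1) := by
        simp only [hK, cross]; ring
      have hr1 : (0:ℝ) < K * (q₂.1 - p₁.1) := by
        rw [e1]
        have := mul_pos (neg_pos.2 c2) (sub_pos.2 xcd)
        have := mul_pos (neg_pos.2 c3) (sub_pos.2 xab)
        linarith
      have hKpos : 0 < K := by
        rcases mul_pos_iff.1 hr1 with ⟨h, _⟩ | ⟨_, h⟩
        · exact h
        · linarith [sub_pos.2 xad]
      have hr2 : K * (p₂.1 - q₁.1) < 0 := by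
        rw [e2]
        have := mul_neg_of_neg_of_pos c4 (sub_pos.2 xab)
        have := mul_neg_of_neg_of_pos c1 (sub_pos.2 xcd)
        linarith
      nlinarith [mul_pos hKpos (sub_pos.2 xcb)]
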